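/- arXiv:2303.05633 — 5 statements merged into one kernel-verified Lean document; each statement's English description precedes it below -/
import Mathlib

section
/- If T is an ω₁-tree (a tree of height ω₁ with countable levels) that has an Aronszajn subtree (an uncountable subset which, with the induced order, has countable levels and no uncountable chain), then T has a downwards closed Aronszajn subtree. -/
noncomputable section

open Cardinal

/-- The first uncountable ordinal. -/
def omegaOne : Ordinal := (Cardinal.aleph 1).ord

/-- A tree of height `ω₁`: a partial order in which the predecessors of every element form
a well-order, recorded by an ordinal-valued height function, with elements at every
countable height. -/
structure Tree1 where
  α : Type
  le : α → α → Prop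
  le_refl : ∀ x, le x x
  le_antisymm : ∀ x y, le x y → le y x → x = y
  le_trans : ∀ x y z, le x y → le y z → le x z
  ht : α → Ordinal
  ht_lt_omegaOne : ∀ x, ht x < omegaOne
  ht_strict : ∀ x y, le x y → x ≠ y → ht x < ht y
  pred_linear : ∀ x y z, le y x → le z x → (le y z ∨ le z y)
  pred_exists : ∀ x β, β < ht x → ∃ y, le y x ∧ ht y = β
  height_surj : ∀ β, β < omegaOne → ∃ x, ht x = β

namespace Tree1

variable (T : Tree1)

/-- Strict tree order. -/
def lt (x y : T.α) : Prop := T.le x y ∧ x ≠ y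

def Incomp (x y : T.α) : Prop := ¬ T.le x y ∧ ¬ T.le y x

/-- A chain: a set of pairwise comparable elements. -/
def Chain (C : Set T.α) : Prop := ∀ x ∈ C, ∀ y ∈ C, T.le x y ∨ T.le y x

/-- An antichain: a set of pairwise incomparable elements. -/
def Antichain (A : Set T.α) : Prop := ∀ x ∈ A, ∀ y ∈ A, x ≠ y → T.Incomp x y

/-- Level `β` of the tree. -/
def Level (β : Ordinal) : Set T.α := {x | T.ht x = β}

/-- An `ω₁`-tree has all levels countable. -/
def CountableLevels : Prop := ∀ β, (T.Level β).Countable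

/-- Suslin: no uncountable chains and no uncountable antichains. -/
def Suslin : Prop :=
  (∀ C : Set T.α, T.Chain C → C.Countable) ∧
  (∀ A : Set T.α, T.Antichain A → A.Countable)

def DownwardsClosed (W : Set T.α) : Prop := ∀ x y, T.le x y → y ∈ W → x ∈ W

/-- Normality: root, ≥ 2 immediate successors, unique limit nodes, successors at all
countable heights. -/
def Normal : Prop :=
  (∃ r, ∀ x, T.le r x) ∧
  (∀ x, ∃ y z : T.α, T.lt x y ∧ T.lt x z ∧ y ≠ z ∧
    T.ht y = T.ht x + 1 ∧ T.ht z = T.ht x + 1) ∧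
  (∀ x y, T.ht x = T.ht y → Order.IsSuccLimit (T.ht x) → (∀ z, T.lt z x ↔ T.lt z y) → x = y) ∧
  (∀ x β, T.ht x ≤ β → β < omegaOne → ∃ y, T.le x y ∧ T.ht y = β)

theorem lt_wf : WellFounded T.lt :=
  Subrelation.wf (fun {x y} h => T.ht_strict x y h.1 h.2) (InvImage.wf T.ht wellFounded_lt)

/-- The height of an element of a subtree `U ⊆ T` computed in the induced order. -/
def subHt (U : Set T.α) (x : U) : Ordinal :=
  @IsWellFounded.rank U (InvImage T.lt Subtype.val) ⟨InvImage.wf Subtype.val T.lt_wf⟩ x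

/-- Levels of the subtree `U` (in the induced order) are countable. -/
def SubLevelsCountable (U : Set T.α) : Prop :=
  ∀ β, {x : U | T.subHt U x = β}.Countable

/-- An Aronszajn subtree: an uncountable subset which, with the induced order, has countable
levels and no uncountable chain. -/
def AronszajnSubtree (U : Set T.α) : Prop :=
  ¬ U.Countable ∧ T.SubLevelsCountable U ∧ ∀ C ⊆ U, T.Chain C → C.Countable

/-- The downward closure of a set. -/
def DownwardClosure (U : Set T.α) : Set T.α := {x | ∃ y ∈ U, T.le x y}

/-- A cofinal branch: a downwards closed chain meeting every level. -/
def CofinalBranch (b : Set T.α) : Prop :=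
  T.DownwardsClosed b ∧ T.Chain b ∧
    ∀ β, β < omegaOne → ∃ x ∈ b, T.ht x = β

end Tree1

/-! ### Auxiliary ordinal lemmas -/

universe u

lemma aux_card_lift_lt {o : Ordinal.{u}} (h : o < omegaOne.{u}) :
    Cardinal.lift.{u+1} o.card < Cardinal.aleph 1 := by
  have h1 : o.card < Cardinal.aleph 1 := Cardinal.lt_ord.1 h
  have h2 := Cardinal.lift_lt.2 h1
  simpa [Cardinal.lift_aleph] using h2

lemma aux_countable_Iio {o : Ordinal.{u}} (h : o < omegaOne.{u}) :
    (Set.Iio o).Countable := by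
  rw [Cardinal.countable_iff_lt_aleph_one, Ordinal.mk_Iio_ordinal]
  exact aux_card_lift_lt h

lemma aux_omegaOne_isLimit : Order.IsSuccLimit omegaOne.{u} :=
  Cardinal.isSuccLimit_ord (Cardinal.aleph0_le_aleph 1)

lemma aux_countable_Iic {o : Ordinal.{u}} (h : o < omegaOne.{u}) :
    (Set.Iic o).Countable := by
  have h1 : Order.succ o < omegaOne.{u} := aux_omegaOne_isLimit.succ_lt h
  exact (aux_countable_Iio h1).mono (fun x hx => (Order.lt_succ_of_le hx : x < Order.succ o))

lemma aux_not_countable_Iio_omegaOne : ¬ (Set.Iio omegaOne.{u}).Countable := by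
  rw [Cardinal.countable_iff_lt_aleph_one, Ordinal.mk_Iio_ordinal]
  simp only [omegaOne, Cardinal.card_ord, Cardinal.lift_aleph]
  simp

lemma aux_bounded_of_countable {S : Set Ordinal.{u}} (hS : S.Countable)
    (h : ∀ s ∈ S, s < omegaOne.{u}) : ∃ γ, γ < omegaOne.{u} ∧ ∀ s ∈ S, s ≤ γ := by
  by_contra hb
  push_neg at hb
  apply aux_not_countable_Iio_omegaOne.{u}
  have hcov : Set.Iio omegaOne.{u} ⊆ ⋃ s ∈ S, Set.Iic s := by
    intro γ hγ
    obtain ⟨s, hsS, hs⟩ := hb γ hγ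
    exact Set.mem_biUnion hsS hs.le
  exact ((hS.biUnion fun s hs => aux_countable_Iic (h s hs))).mono hcov

/-- rank is bounded by any strictly monotone ordinal function. -/
lemma aux_rank_le {σ : Type} {r : σ → σ → Prop} (hwf : IsWellFounded σ r)
    {f : σ → Ordinal.{0}}
    (hf : ∀ a b, r a b → f a < f b) : ∀ a, @IsWellFounded.rank σ r hwf a ≤ f a := by
  intro a
  refine hwf.wf.induction (C := fun a => @IsWellFounded.rank σ r hwf a ≤ f a) a ?_
  intro x IH
  rw [@IsWellFounded.rank_eq σ r hwf]
  apply Ordinal.iSup_le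
  rintro ⟨b, hb⟩
  exact Order.succ_le_of_lt ((IH b hb).trans_lt (hf b x hb))

namespace Tree1

/-- The rank of an element in the whole tree, as an `Ordinal.{0}`. -/
def htZero (T : Tree1) (x : T.α) : Ordinal.{0} :=
  @IsWellFounded.rank T.α T.lt ⟨T.lt_wf⟩ x

variable {T : Tree1}

lemma ht_le_of_le {x y : T.α} (h : T.le x y) : T.ht x ≤ T.ht y := by
  rcases eq_or_ne x y with rfl | hne
  · exact le_rfl
  · exact (T.ht_strict x y h hne).le

lemma le_of_comp {x y : T.α} (h : T.le x y ∨ T.le y x) (hht : T.ht x ≤ T.ht y) :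
    T.le x y := by
  rcases h with h | h
  · exact h
  rcases eq_or_ne x y with rfl | hne
  · exact T.le_refl x
  · exact absurd hht (not_le.2 (T.ht_strict y x h hne.symm))

lemma eq_of_comp_ht_eq {x y : T.α} (h : T.le x y ∨ T.le y x) (hht : T.ht x = T.ht y) :
    x = y :=
  T.le_antisymm x y (le_of_comp h hht.le) (le_of_comp h.symm hht.ge)

lemma lt_trans' {x y z : T.α} (h1 : T.lt x y) (h2 : T.lt y z) : T.lt x z := by
  refine ⟨T.le_trans _ _ _ h1.1 h2.1, ?_⟩
  intro he
  have hxy := T.ht_strict x y h1.1 h1.2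
  have hyz := T.ht_strict y z h2.1 h2.2
  rw [← he] at hyz
  exact absurd (hxy.trans hyz) (lt_irrefl _)

lemma countable_pred (x : T.α) : {y | T.le y x}.Countable := by
  apply Set.MapsTo.countable_of_injOn (f := T.ht) (t := Set.Iic (T.ht x))
  · intro y hy
    exact ht_le_of_le hy
  · intro a ha b hb hab
    exact eq_of_comp_ht_eq (T.pred_linear x a b ha hb) hab
  · exact aux_countable_Iic (T.ht_lt_omegaOne x)

lemma htZero_lt_of_lt {x y : T.α} (h : T.lt x y) : T.htZero x < T.htZero y :=
  IsWellFounded.rank_lt_of_rel (hwf := ⟨T.lt_wf⟩) h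

lemma htZero_rank_eq (x : T.α) :
    T.htZero x = ⨆ b : { b // T.lt b x }, Order.succ (T.htZero b.val) :=
  @IsWellFounded.rank_eq T.α T.lt ⟨T.lt_wf⟩ x

lemma htZero_mono : ∀ x y : T.α, T.ht x ≤ T.ht y → T.htZero x ≤ T.htZero y := by
  intro x
  refine T.lt_wf.induction
    (C := fun x => ∀ y : T.α, T.ht x ≤ T.ht y → T.htZero x ≤ T.htZero y) x ?_
  intro x IH y hxy
  rw [htZero_rank_eq]
  apply Ordinal.iSup_le
  rintro ⟨w, hw⟩
  have hwx : T.ht w < T.ht x := T.ht_strict w x hw.1 hw.2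
  obtain ⟨z, hzy, hz⟩ := T.pred_exists y (T.ht w) (hwx.trans_le hxy)
  have hzney : z ≠ y := by
    intro he
    rw [he] at hz
    rw [hz] at hxy
    exact absurd hxy (not_le.2 hwx)
  have h1 : T.htZero w ≤ T.htZero z := IH w hw z hz.ge
  have h2 : T.htZero z < T.htZero y := htZero_lt_of_lt ⟨hzy, hzney⟩
  exact Order.succ_le_of_lt (h1.trans_lt h2)

lemma htZero_eq_of_ht_eq {x y : T.α} (h : T.ht x = T.ht y) : T.htZero x = T.htZero y :=
  _root_.le_antisymm (htZero_mono x y h.le) (htZero_mono y x h.ge)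

lemma ht_eq_of_htZero_eq {x y : T.α} (h : T.htZero x = T.htZero y) : T.ht x = T.ht y := by
  rcases lt_trichotomy (T.ht x) (T.ht y) with hlt | heq | hgt
  · obtain ⟨z, hzy, hz⟩ := T.pred_exists y (T.ht x) hlt
    have hzney : z ≠ y := fun he => absurd (he ▸ hz ▸ hlt) (lt_irrefl _)
    have := (htZero_mono x z hz.ge).trans_lt (htZero_lt_of_lt ⟨hzy, hzney⟩)
    rw [h] at this
    exact absurd this (lt_irrefl _)
  · exact heq
  · obtain ⟨z, hzx, hz⟩ := T.pred_exists x (T.ht y) hgt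
    have hznex : z ≠ x := fun he => absurd (he ▸ hz ▸ hgt) (lt_irrefl _)
    have := (htZero_mono y z hz.ge).trans_lt (htZero_lt_of_lt ⟨hzx, hznex⟩)
    rw [h] at this
    exact absurd this (lt_irrefl _)

lemma htZero_levels_countable (hT : T.CountableLevels) (β : Ordinal.{0}) :
    {x : T.α | T.htZero x = β}.Countable := by
  rcases Set.eq_empty_or_nonempty {x : T.α | T.htZero x = β} with he | ⟨x₁, hx₁⟩
  · rw [he]; exact Set.countable_empty
  · refine Set.Countable.mono ?_ (hT (T.ht x₁))
    intro y hy
    have : T.htZero y = T.htZero x₁ := by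
      rw [hy, hx₁]
    exact ht_eq_of_htZero_eq this

lemma exists_of_lt_htZero : ∀ x : T.α, ∀ β < T.htZero x, ∃ w, T.lt w x ∧ T.htZero w = β := by
  intro x
  refine T.lt_wf.induction
    (C := fun x => ∀ β < T.htZero x, ∃ w, T.lt w x ∧ T.htZero w = β) x ?_
  intro x IH β hβ
  rw [htZero_rank_eq, Ordinal.lt_iSup_iff] at hβ
  obtain ⟨⟨b, hb⟩, hβb⟩ := hβ
  rw [Order.lt_succ_iff] at hβb
  rcases eq_or_lt_of_le hβb with heq | hlt
  · exact ⟨b, hb, heq.symm⟩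
  · obtain ⟨c, hcb, hc⟩ := IH b hb β hlt
    exact ⟨c, lt_trans' hcb hb, hc⟩

lemma htZero_lt_omegaOne (x : T.α) : T.htZero x < omegaOne.{0} := by
  by_contra hge
  push_neg at hge
  obtain ⟨x₀, -⟩ := T.height_surj 0 aux_omegaOne_isLimit.pos
  apply aux_not_countable_Iio_omegaOne.{0}
  classical
  apply Set.MapsTo.countable_of_injOn
    (f := fun β => if h : ∃ w, T.lt w x ∧ T.htZero w = β then h.choose else x₀)
    (t := {y | T.le y x})
  · intro β hβ
    have hex : ∃ w, T.lt w x ∧ T.htZero w = β :=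
      exists_of_lt_htZero x β (lt_of_lt_of_le hβ hge)
    simp only [Set.mem_setOf_eq, dif_pos hex]
    exact hex.choose_spec.1.1
  · intro a ha b hb heq
    have hexa : ∃ w, T.lt w x ∧ T.htZero w = a :=
      exists_of_lt_htZero x a (lt_of_lt_of_le ha hge)
    have hexb : ∃ w, T.lt w x ∧ T.htZero w = b :=
      exists_of_lt_htZero x b (lt_of_lt_of_le hb hge)
    simp only [dif_pos hexa, dif_pos hexb] at heq
    rw [← hexa.choose_spec.2, ← hexb.choose_spec.2, heq]
  · exact countable_pred x

lemma subHt_lt_of_lt {U : Set T.α} {x y : ↥U} (h : T.lt x.val y.val) :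
    T.subHt U x < T.subHt U y :=
  IsWellFounded.rank_lt_of_rel (hwf := ⟨InvImage.wf Subtype.val T.lt_wf⟩) h

lemma subHt_le_htZero {U : Set T.α} (x : ↥U) : T.subHt U x ≤ T.htZero x.val :=
  aux_rank_le ⟨InvImage.wf Subtype.val T.lt_wf⟩
    (fun a b hab => htZero_lt_of_lt hab) x

lemma subHt_le_of_forall {U : Set T.α} (x : ↥U) {γ : Ordinal.{0}}
    (h : ∀ y : ↥U, T.lt y.val x.val → T.subHt U y ≤ γ) :
    T.subHt U x ≤ Order.succ γ := by
  rw [show T.subHt U x =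
      @IsWellFounded.rank ↥U (InvImage T.lt Subtype.val) ⟨InvImage.wf Subtype.val T.lt_wf⟩ x
      from rfl,
    @IsWellFounded.rank_eq ↥U (InvImage T.lt Subtype.val) ⟨InvImage.wf Subtype.val T.lt_wf⟩]
  apply Ordinal.iSup_le
  rintro ⟨b, hb⟩
  exact Order.succ_le_succ (h b hb)

lemma subHt_eq_htZero {W : Set T.α} (hW : T.DownwardsClosed W) (x : ↥W) :
    T.subHt W x = T.htZero x.val := by
  refine _root_.le_antisymm (subHt_le_htZero x) ?_
  refine (InvImage.wf (Subtype.val : ↥W → T.α) T.lt_wf).induction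
    (C := fun z => T.htZero z.val ≤ T.subHt W z) x ?_
  intro x IH
  rw [htZero_rank_eq]
  apply Ordinal.iSup_le
  rintro ⟨w, hw⟩
  have hwW : w ∈ W := hW w x.val hw.1 x.2
  have hrel : InvImage T.lt Subtype.val (⟨w, hwW⟩ : ↥W) x := hw
  exact Order.succ_le_of_lt ((IH ⟨w, hwW⟩ hrel).trans_lt (subHt_lt_of_lt hw))

lemma subLevels_of_downwardsClosed {W : Set T.α} (hW : T.DownwardsClosed W)
    (hT : T.CountableLevels) : T.SubLevelsCountable W := by
  intro β
  have hsub : {x : ↥W | T.subHt W x = β} ⊆ Subtype.val ⁻¹' {y : T.α | T.htZero y = β} := by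
    intro x hx
    simp only [Set.mem_preimage, Set.mem_setOf_eq]
    rw [← subHt_eq_htZero hW x]
    exact hx
  exact Set.Countable.mono hsub
    ((htZero_levels_countable hT β).preimage Subtype.val_injective)

end Tree1

/-- if an `ω₁`-tree has an Aronszajn subtree, then it has a downwards closed
Aronszajn subtree. -/
theorem rigidKurepa_stmt0 (T : Tree1) (hT : T.CountableLevels)
    (h : ∃ U : Set T.α, T.AronszajnSubtree U) :
    ∃ W : Set T.α, T.DownwardsClosed W ∧ T.AronszajnSubtree W := by
  classical
  obtain ⟨U, hUunc, hUlev, hUch⟩ := h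
  obtain ⟨x₀, -⟩ := T.height_surj 0 aux_omegaOne_isLimit.pos
  refine ⟨T.DownwardClosure U, ?_, ?_, ?_, ?_⟩
  · -- downwards closed
    rintro x y hxy ⟨u, huU, hyu⟩
    exact ⟨u, huU, T.le_trans _ _ _ hxy hyu⟩
  · -- uncountable
    intro hc
    have hsubUW : U ⊆ T.DownwardClosure U := fun u hu => ⟨u, hu, T.le_refl u⟩
    exact hUunc (Set.Countable.mono hsubUW hc)
  · -- countable sublevels
    exact Tree1.subLevels_of_downwardsClosed
      (fun x y hxy hy => by
        obtain ⟨u, huU, hyu⟩ := hy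
        exact ⟨u, huU, T.le_trans _ _ _ hxy hyu⟩) hT
  · -- chains are countable
    intro C hCW hCchain
    by_contra hCunc
    set C' : Set T.α := {x | ∃ c ∈ C, T.le x c} with hC'def
    have hC'chain : T.Chain C' := by
      rintro x ⟨c, hc, hxc⟩ y ⟨d, hd, hyd⟩
      rcases hCchain c hc d hd with h | h
      · exact T.pred_linear d x y (T.le_trans _ _ _ hxc h) hyd
      · exact T.pred_linear c x y hxc (T.le_trans _ _ _ hyd h)
    have hC'W : ∀ x ∈ C', ∃ u ∈ U, T.le x u := by
      rintro x ⟨c, hc, hxc⟩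
      obtain ⟨u, huU, hcu⟩ := hCW hc
      exact ⟨u, huU, T.le_trans _ _ _ hxc hcu⟩
    -- every countable height is realized in C'
    have hcb0 : ∀ β, β < omegaOne → ∃ x, x ∈ C' ∧ T.ht x = β := by
      intro β hβ
      have hex : ∃ c ∈ C, β ≤ T.ht c := by
        by_contra hno
        push_neg at hno
        apply hCunc
        have hsub : C ⊆ ⋃ γ ∈ Set.Iio β, T.Level γ := by
          intro c hc
          exact Set.mem_biUnion (hno c hc) rfl
        exact Set.Countable.mono hsub
          ((aux_countable_Iio hβ).biUnion fun γ _ => hT γ)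
      obtain ⟨c, hc, hβc⟩ := hex
      rcases eq_or_lt_of_le hβc with heq | hlt
      · exact ⟨c, ⟨c, hc, T.le_refl c⟩, heq.symm⟩
      · obtain ⟨y, hyc, hy⟩ := T.pred_exists c β hlt
        exact ⟨y, ⟨c, hc, hyc⟩, hy⟩
    choose cb hcb1 hcb2 using hcb0
    have cbmono : ∀ β γ (hβ : β < omegaOne) (hγ : γ < omegaOne), β ≤ γ →
        T.le (cb β hβ) (cb γ hγ) := by
      intro β γ hβ hγ hle
      apply Tree1.le_of_comp (hC'chain _ (hcb1 β hβ) _ (hcb1 γ hγ))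
      rw [hcb2, hcb2]
      exact hle
    -- the elements of U lying on the branch are few and of bounded height
    have hDcount : (C' ∩ U).Countable :=
      hUch _ Set.inter_subset_right (fun x hx y hy => hC'chain x hx.1 y hy.1)
    obtain ⟨γ₀, hγ₀lt, hγ₀⟩ : ∃ γ, γ < omegaOne.{0} ∧ ∀ d ∈ C' ∩ U, T.htZero d ≤ γ := by
      obtain ⟨γ, hγ1, hγ2⟩ := aux_bounded_of_countable (hDcount.image T.htZero)
        (by rintro s ⟨d, -, rfl⟩; exact Tree1.htZero_lt_omegaOne d)
      exact ⟨γ, hγ1, fun d hd => hγ2 _ (Set.mem_image_of_mem _ hd)⟩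
    -- minimal elements of U above each branch point
    have hub0 : ∀ β (hβ : β < omegaOne), ∃ u, u ∈ U ∧ T.le (cb β hβ) u ∧
        ∀ x, (x ∈ U ∧ T.le (cb β hβ) x) → ¬ T.lt x u := by
      intro β hβ
      obtain ⟨u, huU, hu⟩ := hC'W _ (hcb1 β hβ)
      obtain ⟨m, hm, hmin⟩ := T.lt_wf.has_min {u | u ∈ U ∧ T.le (cb β hβ) u} ⟨u, huU, hu⟩
      exact ⟨m, hm.1, hm.2, hmin⟩
    choose ub hubU huble hubmin using hub0
    -- all U-predecessors of a minimal element lie in C' ∩ U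
    have hpredD : ∀ β (hβ : β < omegaOne), ∀ w, w ∈ U → T.lt w (ub β hβ) → w ∈ C' ∩ U := by
      intro β hβ w hwU hltw
      rcases le_or_gt (T.ht w) β with hle | hgt
      · have hw1 : T.ht w < omegaOne := T.ht_lt_omegaOne w
        have h1 : T.le (cb (T.ht w) hw1) (ub β hβ) :=
          T.le_trans _ _ _ (cbmono _ _ hw1 hβ hle) (huble β hβ)
        have heqw : w = cb (T.ht w) hw1 :=
          Tree1.eq_of_comp_ht_eq (T.pred_linear (ub β hβ) w _ hltw.1 h1)
            (by rw [hcb2])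
        exact ⟨heqw ▸ (hcb1 _ _), hwU⟩
      · exfalso
        have hcble : T.le (cb β hβ) w := by
          apply Tree1.le_of_comp (T.pred_linear (ub β hβ) _ _ (huble β hβ) hltw.1)
          rw [hcb2]
          exact hgt.le
        exact hubmin β hβ w ⟨hwU, hcble⟩ hltw
    -- hence the minimal elements have uniformly bounded rank in U
    have hrank : ∀ β (hβ : β < omegaOne),
        T.subHt U ⟨ub β hβ, hubU β hβ⟩ ≤ Order.succ γ₀ := by
      intro β hβ
      apply Tree1.subHt_le_of_forall
      intro y hy
      have hyD := hpredD β hβ y.val y.2 hy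
      exact (Tree1.subHt_le_htZero y).trans (hγ₀ y.val hyD)
    -- the set of minimal elements is countable, by countability of sublevels
    have hsucclt : Order.succ γ₀ < omegaOne.{0} := aux_omegaOne_isLimit.succ_lt hγ₀lt
    set R : Set ↥U := {x : ↥U | ∃ β, ∃ hβ : β < omegaOne, x.val = ub β hβ} with hRdef
    have hRcount : R.Countable := by
      have hsub : R ⊆ ⋃ γ ∈ Set.Iic (Order.succ γ₀), {x : ↥U | T.subHt U x = γ} := by
        rintro x ⟨β, hβ, hx⟩
        have hxeq : x = ⟨ub β hβ, hubU β hβ⟩ := Subtype.ext hx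
        have hle : T.subHt U x ≤ Order.succ γ₀ := by
          rw [hxeq]
          exact hrank β hβ
        exact Set.mem_biUnion hle rfl
      exact Set.Countable.mono hsub
        ((aux_countable_Iic hsucclt).biUnion fun γ _ => hUlev γ)
    have hR'count : (Subtype.val '' R).Countable := hRcount.image _
    -- each minimal element is above only countably many branch points
    have hFcount : ∀ u : T.α, {β | ∃ hβ : β < omegaOne, T.le (cb β hβ) u}.Countable := by
      intro u
      apply Set.MapsTo.countable_of_injOn
        (f := fun β => if h : β < omegaOne then cb β h else x₀) (t := {y | T.le y u})
      · rintro β ⟨hβ, hle⟩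
        simp only [Set.mem_setOf_eq, dif_pos hβ]
        exact hle
      · rintro β ⟨hβ, -⟩ γ ⟨hγ, -⟩ heq
        simp only [dif_pos hβ, dif_pos hγ] at heq
        have : T.ht (cb β hβ) = T.ht (cb γ hγ) := by rw [heq]
        rwa [hcb2, hcb2] at this
      · exact Tree1.countable_pred u
    -- but the branch points cover all of ω₁ : contradiction
    apply aux_not_countable_Iio_omegaOne
    have hcov : Set.Iio omegaOne ⊆
        ⋃ u ∈ Subtype.val '' R, {β | ∃ hβ : β < omegaOne, T.le (cb β hβ) u} := by
      intro β hβ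
      have hmem : ub β hβ ∈ Subtype.val '' R :=
        ⟨⟨ub β hβ, hubU β hβ⟩, ⟨β, hβ, rfl⟩, rfl⟩
      exact Set.mem_biUnion hmem ⟨hβ, huble β hβ⟩
    exact Set.Countable.mono hcov (hR'count.biUnion fun u _ => hFcount u)
end
end

section
/- Let S be a Suslin tree and D ⊆ S a dense open subset in the reversed (forcing) order. Then there exists γ < ω₁ such that every element of S of height γ belongs to D. -/
noncomputable section

open Cardinal

/-- if `S` is a Suslin tree and `D ⊆ S` is dense open in the reversed (forcing)
order, then some entire level of `S` is contained in `D`. -/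
theorem rigidKurepa_stmt2 (S : Tree1) (hS : S.Suslin) (D : Set S.α)
    (hdense : ∀ x : S.α, ∃ y ∈ D, S.le x y)
    (hopen : ∀ x ∈ D, ∀ y : S.α, S.le x y → y ∈ D) :
    ∃ γ, γ < omegaOne ∧ ∀ x : S.α, S.ht x = γ → x ∈ D := by
  -- maximal antichain contained in D
  obtain ⟨A, ⟨hAD, hA⟩, hmax⟩ :
      ∃ A, Maximal (fun B => B ⊆ D ∧ S.Antichain B) A := by
    apply zorn_subset
    intro c hc hchain
    refine ⟨⋃₀ c, ⟨?_, ?_⟩, fun A hA => Set.subset_sUnion_of_mem hA⟩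
    · intro x hx
      obtain ⟨A, hAc, hxA⟩ := hx
      exact (hc hAc).1 hxA
    · intro x hx y hy hxy
      obtain ⟨A, hAc, hxA⟩ := hx
      obtain ⟨B, hBc, hyB⟩ := hy
      rcases hchain.total hAc hBc with h | h
      · exact (hc hBc).2 x (h hxA) y hyB hxy
      · exact (hc hAc).2 x hxA y (h hyB) hxy
  have hAcount : A.Countable := hS.2 A hA
  -- every y ∈ D is comparable with some a ∈ A
  have hcomp : ∀ y ∈ D, ∃ a ∈ A, S.le a y ∨ S.le y a := by
    intro y hy
    by_contra h
    push_neg at h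
    have hyA : y ∉ A := fun hyA => (h y hyA).1 (S.le_refl y)
    have : insert y A ⊆ A := by
      refine hmax ⟨?_, ?_⟩ (Set.subset_insert _ _)
      · exact Set.insert_subset hy hAD
      · intro u hu v hv huv
        rcases hu with rfl | hu
        · rcases hv with rfl | hv
          · exact absurd rfl huv
          · exact ⟨fun hle => (h v hv).2 hle, fun hle => (h v hv).1 hle⟩
        · rcases hv with rfl | hv
          · exact ⟨fun hle => (h u hu).1 hle, fun hle => (h u hu).2 hle⟩
          · exact hA u hu v hv huv
    exact hyA (this (Set.mem_insert y A))
  -- bound heights of A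
  set γ : Ordinal := ⨆ a : A, (S.ht a.1 + 1) with hγdef
  have hγlt : γ < omegaOne := by
    rw [hγdef]
    refine Ordinal.iSup_lt_ord_lift ?_ ?_
    · unfold omegaOne
      rw [Cardinal.isRegular_aleph_one.cof_eq]
      calc Cardinal.lift #A ≤ Cardinal.lift ℵ₀ := Cardinal.lift_le.2 hAcount.le_aleph0
        _ = ℵ₀ := Cardinal.lift_aleph0
        _ < Cardinal.aleph 1 := Cardinal.aleph0_lt_aleph_one
    · intro a
      have h1 := S.ht_lt_omegaOne a.1
      have h2 : Order.IsSuccLimit omegaOne := Cardinal.isSuccLimit_ord (Cardinal.aleph0_le_aleph 1)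
      exact h2.succ_lt h1
  refine ⟨γ, hγlt, fun x hx => ?_⟩
  have hht : ∀ a ∈ A, S.ht a < S.ht x := by
    intro a ha
    rw [hx]
    exact lt_of_lt_of_le (Order.lt_succ (S.ht a)) (le_ciSup (Ordinal.bddAbove_range _) (⟨a, ha⟩ : A))
  obtain ⟨y, hyD, hxy⟩ := hdense x
  obtain ⟨a, haA, hcase⟩ := hcomp y hyD
  rcases hcase with hay | hya
  · -- a ≤ y, x ≤ y, so a and x comparable; ht a < ht x forces a ≤ x
    rcases S.pred_linear y a x hay hxy with h | h
    · exact hopen a (hAD haA) x h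
    · rcases eq_or_ne x a with rfl | hne
      · exact hAD haA
      · exact absurd (S.ht_strict x a h hne) (lt_asymm (hht a haA))
  · -- y ≤ a, so x ≤ a; contradiction with heights
    have hxa : S.le x a := S.le_trans x y a hxy hya
    rcases eq_or_ne x a with rfl | hne
    · exact hAD haA
    · exact absurd (S.ht_strict x a hxa hne) (lt_asymm (hht a haA))
end
end

section
/- Every normal Suslin tree S with the reversed order is a countably distributive forcing: the intersection of countably many dense open subsets of S (in the reversed order) is dense. Equivalently, for every p ∈ S and every sequence ⟨Dₙ : n < ω⟩ of dense open subsets of S, there exists q ≥_S p with q ∈ Dₙ for all n. -/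
noncomputable section

open Cardinal

/-- a normal Suslin tree, with the reversed order, is countably distributive:
below any condition there is a condition in the intersection of countably many dense open
sets. -/
theorem rigidKurepa_stmt10 (S : Tree1) (hN : S.Normal) (hS : S.Suslin)
    (p : S.α) (D : ℕ → Set S.α)
    (hdense : ∀ n, ∀ x : S.α, ∃ y ∈ D n, S.le x y)
    (hopen : ∀ n, ∀ x ∈ D n, ∀ y : S.α, S.le x y → y ∈ D n) :
    ∃ q : S.α, S.le p q ∧ ∀ n, q ∈ D n := by
  -- Step 1: for each n, choose a maximal antichain contained in D n.
  have hmax : ∀ n : ℕ, ∃ A : Set S.α, A ⊆ D n ∧ S.Antichain A ∧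
      ∀ y ∈ D n, ∃ a ∈ A, S.le a y ∨ S.le y a := by
    intro n
    obtain ⟨A, hA⟩ := zorn_subset {A : Set S.α | A ⊆ D n ∧ S.Antichain A} (by
      intro c hc hchain
      refine ⟨⋃₀ c, ⟨?_, ?_⟩, fun s hs => Set.subset_sUnion_of_mem hs⟩
      · intro x hx
        obtain ⟨s, hs, hxs⟩ := hx
        exact (hc hs).1 hxs
      · intro x hx y hy hxy
        obtain ⟨s, hs, hxs⟩ := hx
        obtain ⟨t, ht, hyt⟩ := hy
        rcases hchain.total hs ht with h | h
        · exact (hc ht).2 x (h hxs) y hyt hxy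
        · exact (hc hs).2 x hxs y (h hyt) hxy)
    refine ⟨A, hA.prop.1, hA.prop.2, ?_⟩
    intro y hy
    by_contra hcon
    push_neg at hcon
    have hyA : y ∉ A := fun h => (hcon y h).1 (S.le_refl y)
    have : insert y A ∈ {A : Set S.α | A ⊆ D n ∧ S.Antichain A} := by
      constructor
      · intro x hx
        rcases hx with rfl | hx
        · exact hy
        · exact hA.prop.1 hx
      · intro x hx z hz hxz
        rcases hx with rfl | hx <;> rcases hz with rfl | hz
        · exact absurd rfl hxz
        · exact ⟨(hcon z hz).2, (hcon z hz).1⟩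
        · exact ⟨(hcon x hx).1, (hcon x hx).2⟩
        · exact hA.prop.2 x hx z hz hxz
    have := hA.eq_of_subset this (Set.subset_insert y A)
    exact hyA (this ▸ Set.mem_insert y A)
  choose A hAD hAanti hAmax using hmax
  -- Step 2: the union of the antichains is countable, so its heights are bounded below ω₁.
  have hAcnt : ∀ n, (A n).Countable := fun n => hS.2 (A n) (hAanti n)
  have hUcnt : (⋃ n, A n).Countable := Set.countable_iUnion hAcnt
  haveI : Countable ↥(⋃ n, A n) := hUcnt.to_subtype
  set γ : Ordinal := ⨆ a : ↥(⋃ n, A n), S.ht a.1 with hγdef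
  have hγlt : γ < omegaOne := by
    rw [hγdef]
    refine Ordinal.iSup_lt_ord_lift (c := omegaOne) (f := fun a : ↥(⋃ n, A n) => S.ht a.1) ?_ (fun a => S.ht_lt_omegaOne a.1)
    show _ < (Cardinal.aleph 1).ord.cof
    rw [Cardinal.isRegular_aleph_one.cof_eq]
    calc Cardinal.lift #↥(⋃ n, A n) ≤ Cardinal.lift ℵ₀ := Cardinal.lift_le.2 Cardinal.mk_le_aleph0
      _ = ℵ₀ := Cardinal.lift_aleph0
      _ < _ := Cardinal.aleph0_lt_aleph_one
  have hγge : ∀ n, ∀ a ∈ A n, S.ht a ≤ γ := by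
    intro n a ha
    exact Ordinal.le_iSup (fun a : ↥(⋃ n, A n) => S.ht a.1) ⟨a, Set.mem_iUnion.2 ⟨n, ha⟩⟩
  -- Step 3: pick q above p of height > γ.
  set β : Ordinal := max (S.ht p) (γ + 1) with hβdef
  have hβlt : β < omegaOne := by
    rw [hβdef, max_lt_iff]
    refine ⟨S.ht_lt_omegaOne p, ?_⟩
    exact (Cardinal.isSuccLimit_ord (Cardinal.aleph0_le_aleph 1)).succ_lt hγlt
  obtain ⟨q, hpq, hqht⟩ := hN.2.2.2 p β (le_max_left _ _) hβlt
  have hγq : γ < S.ht q := by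
    rw [hqht]
    exact lt_of_lt_of_le (Order.lt_succ γ) (le_max_right _ _)
  refine ⟨q, hpq, fun n => ?_⟩
  -- Step 4: q is in D n.
  obtain ⟨y, hyD, hqy⟩ := hdense n q
  obtain ⟨a, haA, hay⟩ := hAmax n y hyD
  have haq : S.le a q ∨ S.le q a := by
    rcases hay with h | h
    · exact S.pred_linear y a q h hqy
    · exact Or.inr (S.le_trans q y a hqy h)
  rcases haq with h | h
  · exact hopen n a (hAD n haA) q h
  · have : q = a := by
      by_contra hne
      exact absurd (S.ht_strict q a h hne) (not_lt.2 (le_of_lt (lt_of_le_of_lt (hγge n a haA) hγq)))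
    exact this ▸ hAD n haA
end
end

section
/- If a tree R of height ω₁ is free (n-free for all 0 < n < ω), then R is rigid: it has no automorphism other than the identity. More precisely, if f : R → R is an automorphism and f(x) ≠ x for some x, then choosing y = f(x), the derived tree R_x ⊗ R_y would contain an uncountable chain {(z, f(z)) : z >_R x}, contradicting that R_x ⊗ R_y is Suslin. -/
noncomputable section

open Cardinal

namespace Tree1

variable (R : Tree1)

/-- The derived tree `R_{x₀} ⊗ ⋯ ⊗ R_{x_{n-1}}`: tuples of elements above the `x i`
having a common height, ordered componentwise. -/
def Derived {n : ℕ} (x : Fin n → R.α) : Type :=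
  {a : Fin n → R.α // (∀ i, R.le (x i) (a i)) ∧ ∀ i j, R.ht (a i) = R.ht (a j)}

/-- The componentwise order on a derived tree. -/
def dle {n : ℕ} {x : Fin n → R.α} (a b : R.Derived x) : Prop :=
  ∀ i, R.le (a.1 i) (b.1 i)

/-- A derived tree is Suslin: all of its chains and antichains are countable. -/
def DerivedSuslin {n : ℕ} (x : Fin n → R.α) : Prop :=
  (∀ C : Set (R.Derived x), (∀ c ∈ C, ∀ d ∈ C, R.dle c d ∨ R.dle d c) → C.Countable) ∧
  (∀ A : Set (R.Derived x), (∀ c ∈ A, ∀ d ∈ A, c ≠ d → ¬ R.dle c d ∧ ¬ R.dle d c) →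
    A.Countable)

/-- `R` is `n`-free: all of its `n`-derived trees are Suslin. -/
def NFree (n : ℕ) : Prop :=
  ∀ x : Fin n → R.α, Function.Injective x → (∀ i j, R.ht (x i) = R.ht (x j)) →
    R.DerivedSuslin x

end Tree1

/-- Any automorphism of a tree is height-nondecreasing. -/
theorem Tree1.ht_le_ht_of_auto (R : Tree1) (g : R.α → R.α) (hinj : Function.Injective g)
    (hg : ∀ x y, R.le x y ↔ R.le (g x) (g y)) : ∀ x, R.ht x ≤ R.ht (g x) := by
  intro x
  refine R.lt_wf.induction (C := fun z => R.ht z ≤ R.ht (g z)) x ?_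
  intro z IH
  refine le_of_forall_lt ?_
  intro γ hγ
  obtain ⟨w, hwz, hwht⟩ := R.pred_exists z γ hγ
  have hne : w ≠ z := by
    rintro rfl; exact absurd hγ (hwht ▸ lt_irrefl _)
  have h2 := IH w ⟨hwz, hne⟩
  have h3 : R.ht (g w) < R.ht (g z) :=
    R.ht_strict _ _ ((hg w z).mp hwz) (fun e => hne (hinj e))
  calc γ = R.ht w := hwht.symm
    _ ≤ R.ht (g w) := h2
    _ < R.ht (g z) := h3

theorem rigid_notCountable_Iio : ¬ (Set.Iio omegaOne).Countable := by
  intro h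
  have := h.to_subtype
  have hmk : #(Set.Iio omegaOne) ≤ Cardinal.aleph0 := Cardinal.mk_le_aleph0
  rw [Ordinal.mk_Iio_ordinal, omegaOne, Cardinal.card_ord, Cardinal.lift_le_aleph0] at hmk
  exact absurd hmk (not_le.mpr Cardinal.aleph0_lt_aleph_one)

/-- a free normal tree of height `ω₁` is rigid: its only automorphism is the
identity. -/
theorem rigidKurepa_stmt13 (R : Tree1) (hR : R.Normal)
    (hfree : ∀ n : ℕ, 0 < n → R.NFree n)
    (f : R.α → R.α) (hbij : Function.Bijective f)
    (hiso : ∀ x y, R.le x y ↔ R.le (f x) (f y)) :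
    ∀ x, f x = x := by
  -- basic order facts
  have hle_ht : ∀ a b, R.le a b → R.ht a ≤ R.ht b := by
    intro a b h
    by_cases e : a = b
    · rw [e]
    · exact (R.ht_strict a b h e).le
  have heq_of_le : ∀ a b, R.le a b → R.ht a = R.ht b → a = b := by
    intro a b h hh
    by_contra hne'
    exact absurd (R.ht_strict a b h hne') (hh ▸ lt_irrefl _)
  -- f preserves heights
  set e := Equiv.ofBijective f hbij with he
  have hef : ∀ z, e z = f z := fun _ => rfl
  have hgiso : ∀ u v, R.le u v ↔ R.le (e.symm u) (e.symm v) := by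
    intro u v
    rw [hiso (e.symm u) (e.symm v), ← hef, ← hef, Equiv.apply_symm_apply, Equiv.apply_symm_apply]
  have htf : ∀ z, R.ht (f z) = R.ht z := by
    intro z
    refine le_antisymm ?_ (R.ht_le_ht_of_auto f hbij.injective hiso z)
    have h := R.ht_le_ht_of_auto e.symm e.symm.injective hgiso (f z)
    rwa [← hef, Equiv.symm_apply_apply] at h
  intro x
  by_contra hnefx
  set y := f x with hy
  have hxy : x ≠ y := fun h => hnefx (h.trans hy).symm
  set v : Fin 2 → R.α := ![x, y] with hv
  have hv0 : v 0 = x := rfl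
  have hv1 : v 1 = y := rfl
  have hvinj : Function.Injective v := by
    intro i j hij
    fin_cases i <;> fin_cases j <;> simp only [Fin.zero_eta, Fin.mk_one, hv0, hv1] at hij ⊢ <;>
      first
        | rfl
        | exact absurd hij hxy
        | exact absurd hij.symm hxy
  have hyx : R.ht y = R.ht x := htf x
  have hvht : ∀ i j, R.ht (v i) = R.ht (v j) := by
    intro i j
    fin_cases i <;> fin_cases j <;> simp only [Fin.zero_eta, Fin.mk_one, hv0, hv1] <;>
      first
        | rfl
        | exact hyx
        | exact hyx.symm
  obtain ⟨-, hA⟩ := hfree 2 (by norm_num) v hvinj hvht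
  -- "good" elements of the derived tree
  set Good : R.Derived v → R.α → Prop := fun p z => ∃ z0 z1 : R.α,
    p.1 0 = z0 ∧ p.1 1 = f z1 ∧ R.lt z z0 ∧ R.lt z z1 ∧ z0 ≠ z1 ∧
    R.ht z0 = R.ht z + 1 ∧ R.ht z1 = R.ht z + 1 with hGoodDef
  -- key comparability lemma
  have hkey : ∀ p q zp zq, Good p zp → Good q zq → R.dle p q → p = q := by
    rintro p q zp zq ⟨z0, z1, hp0, hp1, hz0, hz1, hz01, hhz0, hhz1⟩
      ⟨w0, w1, hq0, hq1, hw0, hw1, hw01, hhw0, hhw1⟩ hle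
    have h0 : R.le z0 w0 := by have := hle 0; rwa [hp0, hq0] at this
    have h1 : R.le z1 w1 := by
      have := hle 1; rw [hp1, hq1] at this; exact (hiso z1 w1).mpr this
    rcases lt_trichotomy (R.ht zp) (R.ht zq) with hlt | heq | hgt
    · exfalso
      have hup : ∀ u0 w0' , R.le u0 w0' → R.lt zq w0' → R.ht u0 = R.ht zp + 1 → R.le u0 zq := by
        intro u0 w0' hu hw hhu
        rcases R.pred_linear w0' u0 zq hu hw.1 with h | h
        · exact h
        · by_cases hzeq : zq = u0
          · rw [hzeq]; exact R.le_refl u0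
          · exfalso
            have : R.ht zq < R.ht zp + 1 := hhu ▸ R.ht_strict zq u0 h hzeq
            exact absurd (Order.lt_add_one_iff.mp this) (not_le.mpr hlt)
      have hA0 : R.le z0 zq := hup z0 w0 h0 hw0 hhz0
      have hA1 : R.le z1 zq := hup z1 w1 h1 hw1 hhz1
      rcases R.pred_linear zq z0 z1 hA0 hA1 with h | h
      · exact hz01 (heq_of_le _ _ h (hhz0.trans hhz1.symm))
      · exact hz01 (heq_of_le _ _ h (hhz1.trans hhz0.symm)).symm
    · -- equal heights
      have e0 : z0 = w0 := heq_of_le _ _ h0 (by rw [hhz0, hhw0, heq])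
      have e1 : z1 = w1 := heq_of_le _ _ h1 (by rw [hhz1, hhw1, heq])
      have ezz : zp = zq := by
        rcases R.pred_linear w0 zp zq (e0 ▸ hz0.1) hw0.1 with h | h
        · exact heq_of_le _ _ h heq
        · exact (heq_of_le _ _ h heq.symm).symm
      refine Subtype.ext (funext fun i => ?_)
      fin_cases i <;> simp only [Fin.zero_eta, Fin.mk_one] <;>
        first
          | rw [hp0, hq0, e0]
          | rw [hp1, hq1, e1]
    · exfalso
      have h01 : R.ht z0 ≤ R.ht w0 := hle_ht _ _ h0
      rw [hhz0, hhw0] at h01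
      have : R.ht zp < R.ht zq + 1 := lt_of_lt_of_le (Order.lt_add_one_iff.mpr le_rfl) h01
      exact absurd (Order.lt_add_one_iff.mp this) (not_le.mpr hgt)
  -- construction of the antichain
  have hex : ∀ β : Ordinal, β < omegaOne →
      ∃ p : R.Derived v, ∃ z, R.ht z = R.ht x + β ∧ Good p z := by
    intro β hβ
    have hγ : R.ht x + β < omegaOne := by
      rw [omegaOne, Cardinal.lt_ord, Ordinal.card_add]
      exact Cardinal.add_lt_of_lt (Cardinal.aleph0_le_aleph 1)
        (Cardinal.lt_ord.mp (R.ht_lt_omegaOne x)) (Cardinal.lt_ord.mp hβ)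
    obtain ⟨z, hxz, hzht⟩ := hR.2.2.2 x (R.ht x + β) le_self_add hγ
    obtain ⟨z0, z1, hlt0, hlt1, hne01, hh0, hh1⟩ := hR.2.1 z
    have hcomp : ∀ i, R.le (v i) (![z0, f z1] i) := by
      intro i
      fin_cases i <;>
        simp only [Fin.zero_eta, Fin.mk_one, hv0, hv1, Matrix.cons_val_zero,
          Matrix.cons_val_one, Matrix.head_cons]
      · exact R.le_trans _ _ _ hxz hlt0.1
      · exact (hiso x z1).mp (R.le_trans _ _ _ hxz hlt1.1)
    have hhts : ∀ i j, R.ht (![z0, f z1] i) = R.ht (![z0, f z1] j) := by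
      have hfz1 : R.ht (f z1) = R.ht z0 := by rw [htf, hh1, hh0]
      intro i j
      fin_cases i <;> fin_cases j <;>
        simp only [Fin.zero_eta, Fin.mk_one, Matrix.cons_val_zero,
          Matrix.cons_val_one, Matrix.head_cons] <;>
        first
          | rfl
          | exact hfz1
          | exact hfz1.symm
    exact ⟨⟨![z0, f z1], hcomp, hhts⟩, z, hzht,
      z0, z1, rfl, rfl, hlt0, hlt1, hne01, hh0, hh1⟩
  choose P Z hZht hGood using hex
  set A : Set (R.Derived v) := {p | ∃ z, Good p z} with hAdef
  have hAcount : A.Countable := by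
    refine hA A ?_
    rintro p ⟨zp, hp⟩ q ⟨zq, hq⟩ hpq
    exact ⟨fun h => hpq (hkey p q zp zq hp hq h),
      fun h => hpq (hkey q p zq zp hq hp h).symm⟩
  -- heights realized in A
  set F : Ordinal → Ordinal := fun β => R.ht x + β + 1 with hF
  have hsucc_inj : ∀ a b : Ordinal, a + 1 = b + 1 → a = b := by
    intro a b hab
    have h1 : a < b + 1 := by rw [← hab]; exact Order.lt_add_one_iff.mpr le_rfl
    have h2 : b < a + 1 := by rw [hab]; exact Order.lt_add_one_iff.mpr le_rfl
    exact le_antisymm (Order.lt_add_one_iff.mp h1) (Order.lt_add_one_iff.mp h2)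
  have hFinj : Set.InjOn F (Set.Iio omegaOne) := by
    intro a _ b _ hab
    simp only [hF] at hab
    rw [add_assoc, add_assoc] at hab
    exact hsucc_inj a b ((add_right_inj (R.ht x)).mp hab)
  have hsub : F '' (Set.Iio omegaOne) ⊆ (fun p => R.ht (p.1 0)) '' A := by
    rintro γ ⟨β, hβ, rfl⟩
    refine ⟨P β hβ, ⟨Z β hβ, hGood β hβ⟩, ?_⟩
    obtain ⟨z0, z1, hp0, _, _, _, _, hh0, _⟩ := hGood β hβ
    show R.ht ((P β hβ).1 0) = R.ht x + β + 1
    rw [hp0, hh0, hZht β hβ]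
  have : (Set.Iio omegaOne).Countable :=
    Set.countable_of_injective_of_countable_image hFinj
      (Set.Countable.mono hsub (hAcount.image _))
  exact rigid_notCountable_Iio this
end
end

section
/- A 2-free normal tree R of height ω₁ is totally rigid: for all distinct x, y ∈ R, the subtrees R_x and R_y are not isomorphic. -/
noncomputable section

open Cardinal

namespace Tree1

variable {R : Tree1}

lemma le_of_le_of_ht_le {z w c : R.α} (hz : R.le z c) (hw : R.le w c)
    (h : R.ht z ≤ R.ht w) : R.le z w := by
  rcases R.pred_linear c z w hz hw with h1 | h1
  · exact h1
  · by_cases he : w = z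
    · subst he; exact R.le_refl w
    · exact absurd (R.ht_strict w z h1 he) (not_lt.mpr h)

lemma eq_of_le_of_ht_eq {z w : R.α} (h : R.le z w) (he : R.ht z = R.ht w) : z = w := by
  by_contra hne
  exact absurd (R.ht_strict z w h hne) (not_lt.mpr he.ge)

lemma iso_min {p q : R.α} {k : {z : R.α // R.le p z} → {z : R.α // R.le q z}}
    (hbij : Function.Bijective k)
    (hiff : ∀ a b, R.le a.1 b.1 ↔ R.le (k a).1 (k b).1) :
    (k ⟨p, R.le_refl p⟩).1 = q := by
  obtain ⟨a, ha⟩ := hbij.2 ⟨q, R.le_refl q⟩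
  have h2 : R.le (k ⟨p, R.le_refl p⟩).1 (k a).1 := (hiff ⟨p, R.le_refl p⟩ a).1 a.2
  rw [ha] at h2
  exact R.le_antisymm _ _ h2 (k ⟨p, R.le_refl p⟩).2

lemma iso_ht_ge {p q : R.α} {k : {z : R.α // R.le p z} → {z : R.α // R.le q z}}
    (hbij : Function.Bijective k)
    (hiff : ∀ a b, R.le a.1 b.1 ↔ R.le (k a).1 (k b).1)
    (hpq : R.ht p = R.ht q) : ∀ a, R.ht a.1 ≤ R.ht (k a).1 := by
  suffices H : ∀ β, ∀ a : {z : R.α // R.le p z}, R.ht a.1 = β → R.ht a.1 ≤ R.ht (k a).1 by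
    exact fun a => H _ a rfl
  intro β
  induction β using Ordinal.induction with
  | _ β IH =>
    intro a haβ
    by_contra hlt
    push_neg at hlt
    have hka_ne : (k a).1 ≠ q := by
      intro h
      have h1 : k a = k ⟨p, R.le_refl p⟩ := Subtype.ext (h.trans (iso_min hbij hiff).symm)
      have h2 := hbij.1 h1
      have h3 : a.1 = p := congrArg Subtype.val h2
      have e1 : R.ht (k a).1 = R.ht q := by rw [h]
      have e2 : R.ht a.1 = R.ht q := by rw [h3, hpq]
      rw [e1, e2] at hlt
      exact lt_irrefl _ hlt
    have hgeq : R.ht q < R.ht (k a).1 := R.ht_strict q (k a).1 (k a).2 (Ne.symm hka_ne)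
    have hγ : R.ht (k a).1 < R.ht a.1 := hlt
    obtain ⟨z, hz, hzht⟩ := R.pred_exists a.1 (R.ht (k a).1) hγ
    have hpz : R.le p z := le_of_le_of_ht_le a.2 hz (by rw [hzht, hpq]; exact hgeq.le)
    have hza : R.le z a.1 := hz
    have hzane : (⟨z, hpz⟩ : {z : R.α // R.le p z}) ≠ a := by
      intro h
      have : z = a.1 := congrArg Subtype.val h
      rw [this] at hzht
      exact absurd hzht (ne_of_lt hγ).symm
    have hkz : R.le (k ⟨z, hpz⟩).1 (k a).1 := (hiff ⟨z, hpz⟩ a).1 hza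
    have hkzne : (k ⟨z, hpz⟩).1 ≠ (k a).1 := by
      intro h
      exact hzane (hbij.1 (Subtype.ext h))
    have h5 : R.ht (k ⟨z, hpz⟩).1 < R.ht (k a).1 := R.ht_strict _ _ hkz hkzne
    have h6 := IH (R.ht (⟨z, hpz⟩ : {z : R.α // R.le p z}).1) (by rw [← haβ]; simpa [hzht] using hγ)
      ⟨z, hpz⟩ rfl
    simp only [hzht] at h6
    exact absurd (lt_of_le_of_lt h6 h5) (lt_irrefl _)

lemma iso_ht_le_add {p q : R.α} {k : {z : R.α // R.le p z} → {z : R.α // R.le q z}}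
    (hbij : Function.Bijective k)
    (hiff : ∀ a b, R.le a.1 b.1 ↔ R.le (k a).1 (k b).1) :
    ∀ a, R.ht (k a).1 ≤ R.ht q + R.ht a.1 := by
  suffices H : ∀ β, ∀ a : {z : R.α // R.le p z}, R.ht a.1 = β →
      R.ht (k a).1 ≤ R.ht q + R.ht a.1 by
    exact fun a => H _ a rfl
  intro β
  induction β using Ordinal.induction with
  | _ β IH =>
    intro a haβ
    by_contra hlt
    push_neg at hlt
    obtain ⟨z, hz, hzht⟩ := R.pred_exists (k a).1 (R.ht q + R.ht a.1) hlt
    have hqz : R.le q z := le_of_le_of_ht_le (k a).2 hz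
      (by rw [hzht]; exact le_self_add)
    obtain ⟨w, hw⟩ := hbij.2 ⟨z, hqz⟩
    have hzka : (k w).1 ≠ (k a).1 := by
      rw [hw]
      intro h
      have h' : z = (k a).1 := h
      rw [h'] at hzht
      exact absurd hzht.symm (ne_of_lt hlt)
    have hwa : R.le w.1 a.1 := (hiff w a).2 (by rw [hw]; exact hz)
    have hwane : w ≠ a := fun h => hzka (congrArg (fun t => (k t).1) h)
    have hhtw : R.ht w.1 < R.ht a.1 := R.ht_strict _ _ hwa (fun h => hwane (Subtype.ext h))
    have h6 := IH (R.ht w.1) (haβ ▸ hhtw) w rfl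
    have h7 : R.ht q + R.ht w.1 < R.ht q + R.ht a.1 := add_lt_add_right hhtw _
    have h8 : R.ht (k w).1 = R.ht q + R.ht a.1 := by rw [hw]; exact hzht
    rw [h8] at h6
    exact absurd (lt_of_le_of_lt h6 h7) (lt_irrefl _)

lemma iso_inv {p q : R.α} {k : {z : R.α // R.le p z} → {z : R.α // R.le q z}}
    (hbij : Function.Bijective k)
    (hiff : ∀ a b, R.le a.1 b.1 ↔ R.le (k a).1 (k b).1) :
    ∃ k' : {z : R.α // R.le q z} → {z : R.α // R.le p z},
      Function.Bijective k' ∧ (∀ a b, R.le a.1 b.1 ↔ R.le (k' a).1 (k' b).1) ∧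
      (∀ a, k' (k a) = a) ∧ (∀ b, k (k' b) = b) := by
  let e := Equiv.ofBijective k hbij
  refine ⟨e.symm, e.symm.bijective, ?_, fun a => e.symm_apply_apply a, fun b => e.apply_symm_apply b⟩
  intro a b
  have ha : k (e.symm a) = a := e.apply_symm_apply a
  have hb : k (e.symm b) = b := e.apply_symm_apply b
  constructor
  · intro h
    exact (hiff (e.symm a) (e.symm b)).2 (by rw [ha, hb]; exact h)
  · intro h
    have := (hiff (e.symm a) (e.symm b)).1 h
    rwa [ha, hb] at this

lemma iso_restrict {p q : R.α} {k : {z : R.α // R.le p z} → {z : R.α // R.le q z}}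
    (hbij : Function.Bijective k)
    (hiff : ∀ a b, R.le a.1 b.1 ↔ R.le (k a).1 (k b).1)
    (u : R.α) (hpu : R.le p u) :
    ∃ k2 : {z : R.α // R.le u z} → {z : R.α // R.le (k ⟨u, hpu⟩).1 z},
      Function.Bijective k2 ∧ (∀ a b, R.le a.1 b.1 ↔ R.le (k2 a).1 (k2 b).1) ∧
      ∀ a, (k2 a).1 = (k ⟨a.1, R.le_trans p u a.1 hpu a.2⟩).1 := by
  obtain ⟨k', hbij', hiff', hk'k, hkk'⟩ := iso_inv hbij hiff
  set v := (k ⟨u, hpu⟩).1 with hvdef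
  have hqv : R.le q v := (k ⟨u, hpu⟩).2
  refine ⟨fun a => ⟨(k ⟨a.1, R.le_trans p u a.1 hpu a.2⟩).1, ?_⟩, ⟨?_, ?_⟩, ?_, fun a => rfl⟩
  · exact (hiff ⟨u, hpu⟩ ⟨a.1, R.le_trans p u a.1 hpu a.2⟩).1 a.2
  · -- injective
    intro a b hab
    have h0 := congrArg (fun (r : {z : R.α // R.le (k ⟨u, hpu⟩).1 z}) => r.1) hab
    have h1 : (k ⟨a.1, R.le_trans p u a.1 hpu a.2⟩).1 = (k ⟨b.1, R.le_trans p u b.1 hpu b.2⟩).1 := h0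
    have h2 : (⟨a.1, R.le_trans p u a.1 hpu a.2⟩ : {z : R.α // R.le p z}) =
        ⟨b.1, R.le_trans p u b.1 hpu b.2⟩ := hbij.1 (Subtype.ext h1)
    have h3 := congrArg (fun (r : {z : R.α // R.le p z}) => r.1) h2
    exact Subtype.ext h3
  · -- surjective
    intro b
    have hqb : R.le q b.1 := R.le_trans q v b.1 hqv b.2
    obtain ⟨a, ha⟩ := hbij.2 ⟨b.1, hqb⟩
    have hua : R.le u a.1 := by
      apply (hiff ⟨u, hpu⟩ a).2
      rw [ha]
      exact b.2
    refine ⟨⟨a.1, hua⟩, ?_⟩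
    apply Subtype.ext
    show (k ⟨a.1, _⟩).1 = b.1
    have : (⟨a.1, R.le_trans p u a.1 hpu hua⟩ : {z : R.α // R.le p z}) = a := Subtype.ext rfl
    rw [this, ha]
  · intro a b
    exact hiff ⟨a.1, R.le_trans p u a.1 hpu a.2⟩ ⟨b.1, R.le_trans p u b.1 hpu b.2⟩

lemma main_aux (R : Tree1) (hR : R.Normal) (h2 : R.NFree 2) (u v : R.α)
    (hne : u ≠ v) (hht : R.ht u = R.ht v)
    (k : {z : R.α // R.le u z} → {z : R.α // R.le v z})
    (hbij : Function.Bijective k)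
    (hiff : ∀ a b, R.le a.1 b.1 ↔ R.le (k a).1 (k b).1) : False := by
  classical
  obtain ⟨k', hbij', hiff', hk'k, hkk'⟩ := iso_inv hbij hiff
  have hpres : ∀ a, R.ht (k a).1 = R.ht a.1 := by
    intro a
    refine _root_.le_antisymm ?_ (iso_ht_ge hbij hiff hht a)
    have h1 := iso_ht_ge hbij' hiff' hht.symm (k a)
    rwa [hk'k a] at h1
  set w : Fin 2 → R.α := ![u, v] with hwdef
  have hw0 : w 0 = u := rfl
  have hw1 : w 1 = v := rfl
  have hinj : Function.Injective w := by
    intro i j hij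
    fin_cases i <;> fin_cases j
    · rfl
    · exact absurd hij hne
    · exact absurd hij.symm hne
    · rfl
  have hhts0 : ∀ i j, R.ht (w i) = R.ht (w j) := by
    intro i j
    fin_cases i <;> fin_cases j <;> simp [hw0, hw1, hht]
  have hmem0 : ∀ e : R.Derived w, R.le u (e.1 0) := fun e => e.2.1 0
  have hmem1 : ∀ e : R.Derived w, R.le v (e.1 1) := fun e => e.2.1 1
  set E : Set (R.Derived w) := {e | (k ⟨e.1 0, hmem0 e⟩).1 = e.1 1} with hEdef
  set S : Set (Set (R.Derived w)) :=
    {A | A ⊆ Eᶜ ∧ ∀ c ∈ A, ∀ d ∈ A, c ≠ d → ¬ R.dle c d ∧ ¬ R.dle d c} with hSdef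
  obtain ⟨A, hAS, hAmax⟩ : ∃ A, Maximal (· ∈ S) A := by
    apply zorn_subset
    intro c hcS hchain
    refine ⟨⋃₀ c, ⟨?_, ?_⟩, fun s hs => Set.subset_sUnion_of_mem hs⟩
    · intro e he
      obtain ⟨s, hs, hes⟩ := he
      exact (hcS hs).1 hes
    · intro a ha b hb hab
      obtain ⟨s, hs, has⟩ := ha
      obtain ⟨t, ht, hbt⟩ := hb
      rcases eq_or_ne s t with h | h
      · subst h; exact (hcS hs).2 a has b hbt hab
      · rcases hchain hs ht h with h1 | h1
        · exact (hcS ht).2 a (h1 has) b hbt hab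
        · exact (hcS hs).2 a has b (h1 hbt) hab
  have hAS' := hAS
  obtain ⟨hAE, hAanti⟩ := hAS'
  have hAcount : A.Countable := (h2 w hinj hhts0).2 A hAanti
  set f0 : ↥A → Ordinal := fun a => R.ht ((a : R.Derived w).1 0) with hf0def
  have hσ'0 : (⨆ a : ↥A, f0 a) < (Cardinal.aleph 1).ord := by
    apply Cardinal.iSup_lt_ord_lift_of_isRegular Cardinal.isRegular_aleph_one
    · exact Cardinal.lift_lt_aleph_one.2 ((Cardinal.countable_iff_lt_aleph_one A).1 hAcount)
    · intro i; exact R.ht_lt_omegaOne _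
  have hσ' : (⨆ a : ↥A, f0 a) < omegaOne := hσ'0
  set σ' := ⨆ a : ↥A, f0 a
  have hbound : ∀ e ∈ A, R.ht (e.1 0) ≤ σ' := by
    intro e he
    exact Ordinal.le_iSup f0 ⟨e, he⟩
  set σ := max (R.ht u) σ' + 1 with hσdef
  have hσlt : σ < omegaOne := by
    have hm : max (R.ht u) σ' < omegaOne := max_lt (R.ht_lt_omegaOne u) hσ'
    rw [hσdef, Ordinal.add_one_eq_succ]
    exact (Cardinal.isSuccLimit_ord (Cardinal.aleph0_le_aleph 1)).succ_lt hm
  have hmaxσ : max (R.ht u) σ' < σ := by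
    rw [hσdef, Ordinal.add_one_eq_succ]; exact Order.lt_succ _
  have hus : R.ht u ≤ σ := le_of_lt (lt_of_le_of_lt (le_max_left _ _) hmaxσ)
  have hσ'σ : σ' < σ := lt_of_le_of_lt (le_max_right _ _) hmaxσ
  obtain ⟨a₀, ha₀u, ha₀ht⟩ := hR.2.2.2 u σ hus hσlt
  set b₀ := (k ⟨a₀, ha₀u⟩).1 with hb₀def
  have hb₀v : R.le v b₀ := (k ⟨a₀, ha₀u⟩).2
  have hb₀ht : R.ht b₀ = σ := by rw [hb₀def, hpres]; exact ha₀ht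
  obtain ⟨a', z1, hlt1, _hlt2, _hne12, hht1, _hht2⟩ := hR.2.1 a₀
  have ha'u : R.le u a' := R.le_trans u a₀ a' ha₀u hlt1.1
  have hhta' : R.ht a' = σ + 1 := by rw [hht1, ha₀ht]
  set c' := (k ⟨a', ha'u⟩).1 with hc'def
  obtain ⟨s, t, hlts, hltt, hstne, hhts1, hhtt1⟩ := hR.2.1 b₀
  have hbs : R.ht s = σ + 1 := by rw [hhts1, hb₀ht]
  have hbt : R.ht t = σ + 1 := by rw [hhtt1, hb₀ht]
  set b' := if s = c' then t else s with hb'def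
  have hb'props : R.le b₀ b' ∧ R.ht b' = σ + 1 ∧ b' ≠ c' := by
    by_cases h : s = c'
    · rw [hb'def, if_pos h]
      exact ⟨hltt.1, hbt, fun ht' => hstne (h.trans ht'.symm)⟩
    · rw [hb'def, if_neg h]
      exact ⟨hlts.1, hbs, h⟩
  have hb'v : R.le v b' := R.le_trans v b₀ b' hb₀v hb'props.1
  set f : R.Derived w := ⟨![a', b'], by
    constructor
    · intro i; fin_cases i
      · exact ha'u
      · exact hb'v
    · intro i j; fin_cases i <;> fin_cases j <;>
        simp [hhta', hb'props.2.1]⟩ with hfdef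
  have hf0' : f.1 0 = a' := rfl
  have hf1' : f.1 1 = b' := rfl
  have hfE : f ∉ E := by
    intro h
    have h1 : (k ⟨a', ha'u⟩).1 = b' := h
    exact hb'props.2.2 (h1 ▸ rfl)
  have hfA : f ∉ A := by
    intro hf
    have h1 := hbound f hf
    rw [hf0', hhta'] at h1
    have h2 : σ' < σ + 1 := lt_trans hσ'σ (by rw [Ordinal.add_one_eq_succ]; exact Order.lt_succ _)
    exact absurd h1 (not_le.2 h2)
  have hcompat : ∃ c ∈ A, R.dle c f ∨ R.dle f c := by
    by_contra hcon
    have hcon' : ∀ c ∈ A, ¬ R.dle c f ∧ ¬ R.dle f c := by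
      intro c hc
      constructor
      · intro hd; exact hcon ⟨c, hc, Or.inl hd⟩
      · intro hd; exact hcon ⟨c, hc, Or.inr hd⟩
    have hA'S : insert f A ∈ S := by
      constructor
      · exact Set.insert_subset hfE hAE
      · intro c hc d hd hcd
        rcases Set.mem_insert_iff.1 hc with hc1 | hc1 <;>
          rcases Set.mem_insert_iff.1 hd with hd1 | hd1
        · exact absurd (hc1.trans hd1.symm) hcd
        · subst hc1
          have h9 := hcon' d hd1
          exact ⟨h9.2, h9.1⟩
        · subst hd1
          have h9 := hcon' c hc1
          exact ⟨h9.1, h9.2⟩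
        · exact hAanti c hc1 d hd1 hcd
    have h3 := hAmax hA'S (Set.subset_insert f A)
    exact hfA (h3 (Set.mem_insert f A))
  obtain ⟨c, hcA, hcf⟩ := hcompat
  have hc0σ' : R.ht (c.1 0) ≤ σ' := hbound c hcA
  rcases hcf with hcf2 | hcf
  · -- dle c f : then c ≤ e₀ and c ∈ E, contradiction
    have h0 : R.le (c.1 0) a' := hcf2 0
    have h1 : R.le (c.1 1) b' := hcf2 1
    have hc01 : R.ht (c.1 1) = R.ht (c.1 0) := c.2.2 1 0
    have hca₀ : R.le (c.1 0) a₀ := by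
      apply le_of_le_of_ht_le h0 hlt1.1
      rw [ha₀ht]
      exact le_of_lt (lt_of_le_of_lt hc0σ' hσ'σ)
    have hcb₀ : R.le (c.1 1) b₀ := by
      apply le_of_le_of_ht_le h1 hb'props.1
      rw [hb₀ht, hc01]
      exact le_of_lt (lt_of_le_of_lt hc0σ' hσ'σ)
    have hmb₀ : R.le (k ⟨c.1 0, hmem0 c⟩).1 b₀ := (hiff ⟨c.1 0, hmem0 c⟩ ⟨a₀, ha₀u⟩).1 hca₀
    have htm : R.ht (k ⟨c.1 0, hmem0 c⟩).1 = R.ht (c.1 1) := by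
      rw [hpres]; exact hc01.symm
    have hle1 : R.le (k ⟨c.1 0, hmem0 c⟩).1 (c.1 1) :=
      le_of_le_of_ht_le hmb₀ hcb₀ htm.le
    have hm : (k ⟨c.1 0, hmem0 c⟩).1 = c.1 1 := eq_of_le_of_ht_eq hle1 htm
    exact (hAE hcA) hm
  · -- dle f c : impossible by heights
    have h0 : R.le a' (c.1 0) := hcf 0
    by_cases he : a' = c.1 0
    · rw [← he] at hc0σ'
      rw [hhta'] at hc0σ'
      have : σ' < σ + 1 := lt_trans hσ'σ (by rw [Ordinal.add_one_eq_succ]; exact Order.lt_succ _)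
      exact absurd hc0σ' (not_le.2 this)
    · have := R.ht_strict a' (c.1 0) h0 he
      rw [hhta'] at this
      have h4 : R.ht (c.1 0) < σ + 1 :=
        lt_of_le_of_lt hc0σ' (lt_trans hσ'σ (by rw [Ordinal.add_one_eq_succ]; exact Order.lt_succ _))
      exact absurd (lt_trans this h4) (lt_irrefl _)

lemma not_iso (R : Tree1) (hR : R.Normal) (h2 : R.NFree 2) (p q : R.α)
    (hne : p ≠ q) (hqp : ¬ R.le q p)
    (k : {z : R.α // R.le p z} → {z : R.α // R.le q z})
    (hbij : Function.Bijective k)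
    (hiff : ∀ a b, R.le a.1 b.1 ↔ R.le (k a).1 (k b).1) : False := by
  set β₁ := max (R.ht p) (R.ht q) + 1 with hβ₁def
  set δ₀ := β₁ * Ordinal.omega0 with hδ₀def
  have hβ₁pos : 0 < β₁ := by
    rw [hβ₁def, Ordinal.add_one_eq_succ]
    exact Order.bot_lt_succ _
  have hF1 : ∀ x y : Ordinal, x < β₁ → y < δ₀ → x + y < δ₀ := by
    intro x y hx hy
    rcases (Ordinal.lt_mul_iff_of_isSuccLimit Ordinal.isSuccLimit_omega0).1 hy with ⟨n', hn', hyn⟩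
    obtain ⟨n, rfl⟩ := Ordinal.lt_omega0.1 hn'
    have h1 : x + y < β₁ + β₁ * n := add_lt_add_of_le_of_lt hx.le hyn
    have h2 : β₁ + β₁ * n = β₁ * (1 + n) := by
      rw [mul_add, mul_one]
    have h3 : ((1 : Ordinal) + n) < Ordinal.omega0 := by
      have h3' : ((1 : Ordinal) + n) = ((1 + n : ℕ) : Ordinal) := by
        rw [Nat.cast_add, Nat.cast_one]
      rw [h3']
      exact Ordinal.nat_lt_omega0 _
    have h4 : β₁ * (1 + n) < δ₀ := by
      rw [hδ₀def]
      exact mul_lt_mul_of_pos_left h3 hβ₁pos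
    rw [h2] at h1
    exact lt_trans h1 h4
  have hδ₀lim : Order.IsSuccLimit δ₀ := Ordinal.isSuccLimit_mul_right hβ₁pos Ordinal.isSuccLimit_omega0
  have hF2 : ∀ x : Ordinal, x < β₁ → x + δ₀ = δ₀ := by
    intro x hx
    apply _root_.le_antisymm
    · rw [Ordinal.add_le_iff_of_isSuccLimit hδ₀lim]
      intro b' hb'
      exact (hF1 x b' hx hb').le
    · exact le_add_self
  have hβ₁lt : β₁ < omegaOne := by
    have hm : max (R.ht p) (R.ht q) < omegaOne := max_lt (R.ht_lt_omegaOne p) (R.ht_lt_omegaOne q)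
    rw [hβ₁def, Ordinal.add_one_eq_succ]
    exact (Cardinal.isSuccLimit_ord (Cardinal.aleph0_le_aleph 1)).succ_lt hm
  have hδ₀lt : δ₀ < omegaOne := by
    rw [omegaOne, Cardinal.lt_ord, hδ₀def, Ordinal.card_mul, Ordinal.card_omega0]
    have h1 : β₁.card ≤ ℵ₀ := by
      have h2 : β₁.card < Cardinal.aleph 1 := by
        rw [← Cardinal.lt_ord]; exact hβ₁lt
      rwa [← Cardinal.succ_aleph0, Order.lt_succ_iff] at h2
    calc β₁.card * ℵ₀ ≤ ℵ₀ * ℵ₀ := mul_le_mul' h1 le_rfl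
      _ = ℵ₀ := Cardinal.aleph0_mul_aleph0
      _ < ℵ₁ := Cardinal.aleph0_lt_aleph_one
  have hβ₁le : β₁ ≤ δ₀ := by
    calc β₁ = β₁ * 1 := (mul_one _).symm
      _ ≤ β₁ * Ordinal.omega0 := mul_le_mul_right Ordinal.one_lt_omega0.le _
  have hhtpβ : R.ht p < β₁ := by
    rw [hβ₁def, Ordinal.add_one_eq_succ]
    exact lt_of_le_of_lt (le_max_left _ _) (Order.lt_succ _)
  have hhtqβ : R.ht q < β₁ := by
    rw [hβ₁def, Ordinal.add_one_eq_succ]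
    exact lt_of_le_of_lt (le_max_right _ _) (Order.lt_succ _)
  have hhtpδ : R.ht p < δ₀ := lt_of_lt_of_le hhtpβ hβ₁le
  obtain ⟨k', hbij', hiff', hk'k, hkk'⟩ := iso_inv hbij hiff
  have hexu : ∃ a : {z : R.α // R.le p z}, R.ht a.1 = δ₀ ∧ (k a).1 ≠ a.1 := by
    by_cases hpq : R.le p q
    · by_contra hall
      push_neg at hall
      have hqhat : R.le p q := hpq
      have hy₂le : R.le q (k ⟨q, hpq⟩).1 := (k ⟨q, hpq⟩).2
      have hy₂ne : (k ⟨q, hpq⟩).1 ≠ q := by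
        intro h
        have h1 : k ⟨q, hpq⟩ = k ⟨p, R.le_refl p⟩ :=
          Subtype.ext (h.trans (iso_min hbij hiff).symm)
        have h2 := hbij.1 h1
        exact hne (congrArg Subtype.val h2).symm
      have hhty₂ : R.ht q < R.ht (k ⟨q, hpq⟩).1 :=
        R.ht_strict q _ hy₂le (Ne.symm hy₂ne)
      obtain ⟨s, t, hlts, hltt, hstne, hhts, hhtt⟩ := hR.2.1 q
      have key : ∀ w', R.lt q w' → R.ht w' = R.ht q + 1 → R.le w' (k ⟨q, hpq⟩).1 := by
        intro w' hltw hhtw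
        have hw'δ : R.ht w' ≤ δ₀ := by
          rw [hhtw]
          refine _root_.le_trans ?_ hβ₁le
          rw [Ordinal.add_one_eq_succ]
          exact Order.succ_le_of_lt hhtqβ
        obtain ⟨uw, huw, huwht⟩ := hR.2.2.2 w' δ₀ hw'δ hδ₀lt
        have hpuw : R.le p uw := R.le_trans p q uw hpq (R.le_trans q w' uw hltw.1 huw)
        have hfix : (k ⟨uw, hpuw⟩).1 = uw := hall ⟨uw, hpuw⟩ huwht
        have h1 : R.le q uw := R.le_trans q w' uw hltw.1 huw
        have h2 : R.le (k ⟨q, hpq⟩).1 uw := by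
          have h3 := (hiff ⟨q, hpq⟩ ⟨uw, hpuw⟩).1 h1
          rwa [hfix] at h3
        apply le_of_le_of_ht_le huw h2
        rw [hhtw, Ordinal.add_one_eq_succ]
        exact Order.succ_le_of_lt hhty₂
      have h4 := key s hlts hhts
      have h5 := key t hltt hhtt
      rcases R.pred_linear (k ⟨q, hpq⟩).1 s t h4 h5 with h | h
      · exact hstne (eq_of_le_of_ht_eq h (hhts.trans hhtt.symm))
      · exact hstne (eq_of_le_of_ht_eq h (hhtt.trans hhts.symm)).symm
    · obtain ⟨u, hpu, huht⟩ := hR.2.2.2 p δ₀ hhtpδ.le hδ₀lt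
      refine ⟨⟨u, hpu⟩, huht, ?_⟩
      intro hfix
      have hqu : R.le q u := by
        have h8 := (k ⟨u, hpu⟩).2
        rwa [hfix] at h8
      rcases R.pred_linear u p q hpu hqu with h | h
      · exact hpq h
      · exact hqp h
  obtain ⟨uu, huuht, huune⟩ := hexu
  have hqv : R.le q (k uu).1 := (k uu).2
  have hvne : uu.1 ≠ (k uu).1 := Ne.symm huune
  have hhtv : R.ht (k uu).1 = δ₀ := by
    have hle : R.ht (k uu).1 ≤ δ₀ := by
      have h1 := iso_ht_le_add hbij hiff uu
      rwa [huuht, hF2 _ hhtqβ] at h1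
    have hge : δ₀ ≤ R.ht (k uu).1 := by
      by_contra hlt
      push_neg at hlt
      have hveq : k' ⟨(k uu).1, hqv⟩ = uu := by
        have h7 : (⟨(k uu).1, hqv⟩ : {z : R.α // R.le q z}) = k uu := Subtype.ext rfl
        rw [h7, hk'k]
      have h6 := iso_ht_le_add hbij' hiff' ⟨(k uu).1, hqv⟩
      rw [hveq, huuht] at h6
      exact absurd (lt_of_le_of_lt h6 (hF1 _ _ hhtpβ hlt)) (lt_irrefl _)
    exact _root_.le_antisymm hle hge
  obtain ⟨k2, hk2bij, hk2iff, _⟩ := iso_restrict hbij hiff uu.1 uu.2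
  exact main_aux R hR h2 uu.1 (k uu).1 hvne (by rw [huuht, hhtv]) k2 hk2bij hk2iff

end Tree1

/-- a `2`-free normal tree of height `ω₁` is totally rigid: for distinct
`x, y ∈ R` the subtrees `R_x` and `R_y` are not isomorphic. -/
theorem rigidKurepa_stmt14 (R : Tree1) (hR : R.Normal) (h2 : R.NFree 2) :
    ∀ x y : R.α, x ≠ y →
      ¬ ∃ g : {z : R.α // R.le x z} → {z : R.α // R.le y z},
        Function.Bijective g ∧ ∀ a b, R.le a.1 b.1 ↔ R.le (g a).1 (g b).1 := by
  intro x y hxy hiso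
  obtain ⟨g, hbij, hiff⟩ := hiso
  by_cases h1 : R.le y x
  · have h2' : ¬ R.le x y := fun h => hxy (R.le_antisymm x y h h1)
    obtain ⟨g', hbij', hiff', _, _⟩ := Tree1.iso_inv hbij hiff
    exact Tree1.not_iso R hR h2 y x (Ne.symm hxy) h2' g' hbij' hiff'
  · exact Tree1.not_iso R hR h2 x y hxy h1 g hbij hiff
end
end
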